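/- For all positive integers $k$ and $N$, there exist finite simple connected graphs $G$ and $H$ such that $H$ is a proper subgraph of $G$ and $\dim_k(H) > N \cdot \dim_k(G)$. -/

import Mathlib

open SimpleGraph

/-- The distance-`k` truncated distance `dₖ(x,y) = min{d(x,y), k+1}`, valued in `ℕ∞`
(so unreachable pairs have distance `⊤`, which is truncated to `k+1`). -/
noncomputable def distK {V : Type*} (G : SimpleGraph V) (k : ℕ) (x y : V) : ℕ∞ :=
  min (G.edist x y) (k + 1)

/-- `S` is a distance-`k` resolving set of `G`. -/
def IsDistKResolving {V : Type*} (G : SimpleGraph V) (k : ℕ) (S : Set V) : Prop :=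
  ∀ x y : V, x ≠ y → ∃ z ∈ S, distK G k x z ≠ distK G k y z

/-- The distance-`k` dimension of a finite graph `G`: the minimum cardinality of a
distance-`k` resolving set of `G`. -/
noncomputable def dimK {V : Type*} [Fintype V] (G : SimpleGraph V) (k : ℕ) : ℕ :=
  sInf { m | ∃ S : Finset V, IsDistKResolving G k ↑S ∧ S.card = m }

lemma distK_self {V : Type*} (G : SimpleGraph V) (k : ℕ) (x : V) : distK G k x x = 0 := by
  simp [distK, SimpleGraph.edist_self]

lemma distK_ne_zero {V : Type*} {G : SimpleGraph V} {k : ℕ} {x y : V} (h : x ≠ y) :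
    distK G k x y ≠ 0 := by
  have h1 : 0 < G.edist x y := SimpleGraph.edist_pos_of_ne h
  have h2 : (0 : ℕ∞) < (k : ℕ∞) + 1 := by
    have := Nat.succ_pos k
    exact_mod_cast this
  exact (lt_min h1 h2).ne'

lemma distK_of_adj {V : Type*} {G : SimpleGraph V} {k : ℕ} {x y : V} (h : G.Adj x y) :
    distK G k x y = 1 := by
  rw [distK, SimpleGraph.edist_eq_one_iff_adj.mpr h]
  exact min_eq_left le_add_self

lemma two_le_coe_add_one {k : ℕ} (hk : 1 ≤ k) : (2 : ℕ∞) ≤ (k : ℕ∞) + 1 := by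
  have h1 : (1 : ℕ∞) ≤ (k : ℕ∞) := by exact_mod_cast hk
  calc (2 : ℕ∞) = 1 + 1 := by rfl
    _ ≤ (k : ℕ∞) + 1 := add_le_add_left h1 1

lemma distK_eq_two {V : Type*} {G : SimpleGraph V} {k : ℕ} (hk : 1 ≤ k) {x y c : V}
    (hne : x ≠ y) (hna : ¬ G.Adj x y) (h1 : G.Adj x c) (h2 : G.Adj c y) :
    distK G k x y = 2 := by
  have hub : G.edist x y ≤ 2 := by
    calc G.edist x y ≤ G.edist x c + G.edist c y := G.edist_triangle
      _ = 2 := by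
        rw [SimpleGraph.edist_eq_one_iff_adj.mpr h1, SimpleGraph.edist_eq_one_iff_adj.mpr h2]
        rfl
  have hpos : 1 ≤ G.edist x y := Order.one_le_iff_pos.mpr (SimpleGraph.edist_pos_of_ne hne)
  have hne1 : G.edist x y ≠ 1 := fun h => hna (SimpleGraph.edist_eq_one_iff_adj.mp h)
  have hlt : 1 < G.edist x y := lt_of_le_of_ne hpos (Ne.symm hne1)
  have hlb : (2 : ℕ∞) ≤ G.edist x y := by
    have := Order.add_one_le_of_lt hlt
    calc (2 : ℕ∞) = 1 + 1 := by rfl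
      _ ≤ G.edist x y := this
  rw [distK, le_antisymm hub hlb]
  exact min_eq_left (two_le_coe_add_one hk)

lemma univ_resolving {V : Type*} [Fintype V] (G : SimpleGraph V) (k : ℕ) :
    IsDistKResolving G k (↑(Finset.univ : Finset V)) := by
  intro x y hxy
  refine ⟨x, by simp, ?_⟩
  rw [distK_self]
  exact (distK_ne_zero hxy.symm).symm

/-- The big graph: vertex `0` is the center, vertices `1..r` are leaves,
vertices `> r` are landmarks; leaf `a` is adjacent to landmark `b` iff bit
`b - (r+1)` of `a - 1` is set; the center is adjacent to everything. -/
def GAdj (r : ℕ) (a b : ℕ) : Prop :=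
  a ≠ b ∧ (a = 0 ∨ b = 0 ∨
    (1 ≤ a ∧ a ≤ r ∧ r < b ∧ Nat.testBit (a - 1) (b - (r + 1)) = true) ∨
    (1 ≤ b ∧ b ≤ r ∧ r < a ∧ Nat.testBit (b - 1) (a - (r + 1)) = true))

def myG (r n : ℕ) : SimpleGraph (Fin n) where
  Adj a b := GAdj r a.val b.val
  symm := by
    constructor
    intro a b h
    obtain ⟨h1, h2⟩ := h
    exact ⟨h1.symm, by tauto⟩
  loopless := by
    constructor
    intro a h
    exact h.1 rfl

/-- The subgraph: the star on the center and the leaves. -/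
def myH (n : ℕ) (s : Finset (Fin n)) : SimpleGraph {x : Fin n // x ∈ s} where
  Adj a b := ((a : Fin n).val = 0 ∧ (b : Fin n).val ≠ 0) ∨
    ((b : Fin n).val = 0 ∧ (a : Fin n).val ≠ 0)
  symm := by constructor; intro a b h; tauto
  loopless := by constructor; intro a h; tauto

/-- For all positive integers `k` and `N`, there exist connected graphs `G` and `H`
such that `H` is a proper subgraph of `G` and `dimₖ(H) > N * dimₖ(G)`. -/
theorem stmt2 (k N : ℕ) (hk : 1 ≤ k) (hN : 1 ≤ N) :
    ∃ (n : ℕ) (G : SimpleGraph (Fin n)) (s : Finset (Fin n))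
      (H : SimpleGraph {x : Fin n // x ∈ s}),
      G.Connected ∧ H.Connected ∧
      (∀ a b : {x : Fin n // x ∈ s}, H.Adj a b → G.Adj (↑a) (↑b)) ∧
      (s ≠ Finset.univ ∨ ∃ a b : {x : Fin n // x ∈ s}, G.Adj (↑a) (↑b) ∧ ¬ H.Adj a b) ∧
      N * dimK G k < dimK H k := by
  classical
  set t : ℕ := 2 * N + 3 with ht
  set r : ℕ := N * (t + 1) + 2 with hr
  set n : ℕ := r + t + 1 with hn
  -- numeric facts
  have hN2 : N < 2 ^ N := Nat.lt_two_pow_self (n := N)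
  have hpow : 2 ^ t = 8 * (2 ^ N * 2 ^ N) := by
    rw [ht, show 2 * N + 3 = N + N + 3 by ring, pow_add, pow_add]
    ring
  have hrt : r ≤ 2 ^ t := by
    rw [hpow, hr, ht]
    nlinarith [hN2]
  have hr2 : 2 ≤ r := by omega
  have hrn : r + 1 < n := by omega
  -- the vertex names
  have hn0 : 0 < n := by omega
  set cen : Fin n := ⟨0, hn0⟩ with hcend
  set rv : Fin n := ⟨r, by omega⟩ with hrvd
  set s : Finset (Fin n) := Finset.Iic rv with hsd
  have hmem_s : ∀ x : Fin n, x ∈ s ↔ x.val ≤ r := by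
    intro x
    rw [hsd, Finset.mem_Iic]
    exact Fin.le_def
  have hcen_mem : cen ∈ s := by rw [hmem_s]; exact Nat.zero_le r
  -- basic adjacency in G
  have hadj_cen : ∀ x : Fin n, x.val ≠ 0 → (myG r n).Adj cen x := by
    intro x hx
    exact ⟨fun h => hx h.symm, Or.inl rfl⟩
  have hreach : ∀ x : Fin n, (myG r n).Reachable cen x := by
    intro x
    by_cases hx : x = cen
    · rw [hx]
    · exact ((hadj_cen x (fun h => hx (Fin.ext h)))).reachable
  have hGconn : (myG r n).Connected := by
    rw [connected_iff]
    exact ⟨fun x y => (hreach x).symm.trans (hreach y), ⟨cen⟩⟩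
  -- distance from a leaf to a landmark in G
  have hdistG : ∀ (x z : Fin n), 1 ≤ x.val → x.val ≤ r → r < z.val →
      distK (myG r n) k x z =
        (if Nat.testBit (x.val - 1) (z.val - (r + 1)) then 1 else 2) := by
    intro x z h1 h2 h3
    by_cases hb : Nat.testBit (x.val - 1) (z.val - (r + 1)) = true
    · rw [if_pos hb]
      exact distK_of_adj ⟨by omega, Or.inr (Or.inr (Or.inl ⟨h1, h2, h3, hb⟩))⟩
    · rw [if_neg hb]
      have hna : ¬ (myG r n).Adj x z := by
        rintro ⟨hne, hc | hc | ⟨_, _, _, hbit⟩ | ⟨_, hc, _, _⟩⟩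
        · omega
        · omega
        · exact hb hbit
        · omega
      refine distK_eq_two hk ?_ hna ((hadj_cen x (by omega)).symm) (hadj_cen z (by omega))
      intro h
      rw [h] at h2
      omega
  -- the resolving set for G : the center together with all landmarks
  set SG : Finset (Fin n) := insert cen sᶜ with hSGd
  have hSGres : IsDistKResolving (myG r n) k ↑SG := by
    intro x y hxy
    have hv : x.val ≠ y.val := fun h => hxy (Fin.ext h)
    by_cases hx0 : x.val = 0
    · refine ⟨cen, by simp [hSGd], ?_⟩
      have hxc : x = cen := Fin.ext hx0
      rw [hxc, distK_self]
      exact (distK_ne_zero (fun h => hxy (hxc.trans h.symm))).symm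
    by_cases hy0 : y.val = 0
    · refine ⟨cen, by simp [hSGd], ?_⟩
      have hyc : y = cen := Fin.ext hy0
      rw [hyc, distK_self]
      exact distK_ne_zero (fun h => hxy (h.trans hyc.symm))
    by_cases hxr : r < x.val
    · refine ⟨x, ?_, ?_⟩
      · rw [Finset.mem_coe, hSGd, Finset.mem_insert]
        right
        rw [Finset.mem_compl, hmem_s]
        omega
      · rw [distK_self]
        exact (distK_ne_zero hxy.symm).symm
    by_cases hyr : r < y.val
    · refine ⟨y, ?_, ?_⟩
      · rw [Finset.mem_coe, hSGd, Finset.mem_insert]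
        right
        rw [Finset.mem_compl, hmem_s]
        omega
      · rw [distK_self]
        exact distK_ne_zero hxy
    · -- both are leaves : use a landmark on which their codes differ
      obtain ⟨j, hj⟩ : ∃ j, Nat.testBit (x.val - 1) j ≠ Nat.testBit (y.val - 1) j := by
        by_contra h
        push_neg at h
        have : x.val - 1 = y.val - 1 := Nat.eq_of_testBit_eq h
        omega
      have hjt : j < t := by
        by_contra hjt
        push_neg at hjt
        have hmono : 2 ^ t ≤ 2 ^ j := Nat.pow_le_pow_right (by norm_num) hjt
        have hx2 : x.val - 1 < 2 ^ j := by omega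
        have hy2 : y.val - 1 < 2 ^ j := by omega
        rw [Nat.testBit_eq_false_of_lt hx2, Nat.testBit_eq_false_of_lt hy2] at hj
        exact hj rfl
      have hlt : r + 1 + j < n := by omega
      set z : Fin n := ⟨r + 1 + j, hlt⟩ with hzd
      have hzv : z.val = r + 1 + j := rfl
      have hidx : z.val - (r + 1) = j := by omega
      refine ⟨z, ?_, ?_⟩
      · rw [Finset.mem_coe, hSGd, Finset.mem_insert]
        right
        rw [Finset.mem_compl, hmem_s]
        omega
      · rw [hdistG x z (by omega) (by omega) (by omega),
          hdistG y z (by omega) (by omega) (by omega), hidx]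
        rcases Bool.eq_false_or_eq_true (Nat.testBit (x.val - 1) j) with hbx | hbx <;>
          rcases Bool.eq_false_or_eq_true (Nat.testBit (y.val - 1) j) with hby | hby <;>
          rw [hbx, hby] <;> simp_all
  have hscard : s.card = r + 1 := by
    rw [hsd, Fin.card_Iic]
  have hSGcard : SG.card = t + 1 := by
    rw [hSGd, Finset.card_insert_of_notMem (by simp [hcen_mem]), Finset.card_compl, hscard]
    simp only [Fintype.card_fin]
    omega
  have hGle : dimK (myG r n) k ≤ t + 1 := Nat.sInf_le ⟨SG, hSGres, hSGcard⟩
  -- the subgraph H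
  set cen0 : {x : Fin n // x ∈ s} := ⟨cen, hcen_mem⟩ with hcen0d
  have hval0 : ∀ a : {x : Fin n // x ∈ s}, (a : Fin n).val = 0 ↔ a = cen0 := by
    intro a
    constructor
    · intro h
      exact Subtype.ext (Fin.ext h)
    · intro h
      rw [h]
  have hadjH : ∀ a : {x : Fin n // x ∈ s}, a ≠ cen0 → (myH n s).Adj cen0 a := by
    intro a ha
    exact Or.inl ⟨rfl, fun h => ha ((hval0 a).mp h)⟩
  have hHconn : (myH n s).Connected := by
    rw [connected_iff]
    refine ⟨fun x y => ?_, ⟨cen0⟩⟩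
    have hx : (myH n s).Reachable cen0 x := by
      by_cases h : x = cen0
      · rw [h]
      · exact (hadjH x h).reachable
    have hy : (myH n s).Reachable cen0 y := by
      by_cases h : y = cen0
      · rw [h]
      · exact (hadjH y h).reachable
    exact hx.symm.trans hy
  -- lower bound on the dimension of H
  have hHne : {m | ∃ S : Finset {x : Fin n // x ∈ s},
      IsDistKResolving (myH n s) k ↑S ∧ S.card = m}.Nonempty :=
    ⟨Finset.univ.card, Finset.univ, univ_resolving (myH n s) k, rfl⟩
  obtain ⟨S, hSres, hScard⟩ := Nat.sInf_mem hHne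
  have hpair : ∀ a b : {x : Fin n // x ∈ s}, a ≠ b → a ≠ cen0 → b ≠ cen0 → a ∉ S → b ∈ S := by
    intro a b hab ha hb haS
    obtain ⟨z, hzS, hz⟩ := hSres a b hab
    rw [Finset.mem_coe] at hzS
    rcases eq_or_ne z a with rfl | hza
    · exact absurd hzS haS
    rcases eq_or_ne z b with rfl | hzb
    · exact hzS
    exfalso
    apply hz
    rcases eq_or_ne z cen0 with rfl | hzc
    · rw [distK_of_adj ((hadjH a ha).symm), distK_of_adj ((hadjH b hb).symm)]
    · have hnaz : ¬ (myH n s).Adj a z := by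
        rintro (⟨h1, _⟩ | ⟨h1, _⟩)
        · exact ha ((hval0 a).mp h1)
        · exact hzc ((hval0 z).mp h1)
      have hnbz : ¬ (myH n s).Adj b z := by
        rintro (⟨h1, _⟩ | ⟨h1, _⟩)
        · exact hb ((hval0 b).mp h1)
        · exact hzc ((hval0 z).mp h1)
      rw [distK_eq_two hk (Ne.symm hza) hnaz ((hadjH a ha).symm) (hadjH z hzc),
        distK_eq_two hk (Ne.symm hzb) hnbz ((hadjH b hb).symm) (hadjH z hzc)]
  have hTcard : (Finset.univ.erase cen0).card = r := by
    rw [Finset.card_erase_of_mem (Finset.mem_univ _), Finset.card_univ, Fintype.card_coe, hscard]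
    omega
  have hTS : ((Finset.univ.erase cen0) \ S).card ≤ 1 := by
    rw [Finset.card_le_one]
    intro a ha b hb
    by_contra hab
    have ha' := Finset.mem_sdiff.mp ha
    have hb' := Finset.mem_sdiff.mp hb
    exact hb'.2 (hpair a b hab (Finset.mem_erase.mp ha'.1).1 (Finset.mem_erase.mp hb'.1).1 ha'.2)
  have hge : r - 1 ≤ S.card := by
    have h1 : ((Finset.univ.erase cen0) \ S).card + ((Finset.univ.erase cen0) ∩ S).card
        = (Finset.univ.erase cen0).card := Finset.card_sdiff_add_card_inter _ _
    have h2 : ((Finset.univ.erase cen0) ∩ S).card ≤ S.card :=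
      Finset.card_le_card Finset.inter_subset_right
    omega
  have hHge : r - 1 ≤ dimK (myH n s) k := by
    rw [dimK, ← hScard]
    exact hge
  -- assemble
  refine ⟨n, myG r n, s, myH n s, hGconn, hHconn, ?_, ?_, ?_⟩
  · intro a b hab
    rcases hab with ⟨h1, h2⟩ | ⟨h1, h2⟩
    · exact ⟨by omega, Or.inl h1⟩
    · exact ⟨by omega, Or.inr (Or.inl h1)⟩
  · left
    intro h
    have hlm : (⟨r + 1, by omega⟩ : Fin n) ∈ s := Finset.eq_univ_iff_forall.mp h _
    rw [hmem_s] at hlm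
    exact (by omega : ¬ (r + 1 ≤ r)) hlm
  · calc N * dimK (myG r n) k ≤ N * (t + 1) := Nat.mul_le_mul_left N hGle
      _ < r - 1 := by omega
      _ ≤ dimK (myH n s) k := hHge
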